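/- The probability of the event that the sampled feasible set is not contained in the feasible set, 𝒫({ω ∈ Ω : 𝕏₀^{α,M}(ω) ⊄ 𝕏₀^ε}), is at most L·exp(−2M(ε−α)²). -/

import Mathlib

open MeasureTheory ProbabilityTheory

/-- Hoeffding's lemma, Bernoulli case: `1 - p + p e^t ≤ exp (p t + t²/8)`. -/
lemma bernoulli_mgf_le {p : ℝ} (hp0 : 0 ≤ p) (hp1 : p ≤ 1) (t : ℝ) :
    1 - p + p * Real.exp t ≤ Real.exp (p * t + t ^ 2 / 8) := by
  have hu : ∀ s : ℝ, 0 < 1 - p + p * Real.exp s := by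
    intro s
    rcases lt_or_eq_of_le hp1 with h | h
    · nlinarith [Real.exp_pos s, mul_nonneg hp0 (Real.exp_pos s).le]
    · rw [h]; simpa using Real.exp_pos s
  set F : ℝ → ℝ := fun s => p * s + s ^ 2 / 8 - Real.log (1 - p + p * Real.exp s) with hF
  set G : ℝ → ℝ := fun s => p + s / 4 - p * Real.exp s / (1 - p + p * Real.exp s) with hG
  have hFd : ∀ s : ℝ, HasDerivAt F (G s) s := by
    intro s
    have h1 : HasDerivAt (fun s => 1 - p + p * Real.exp s) (p * Real.exp s) s := by
      simpa using ((Real.hasDerivAt_exp s).const_mul p).const_add (1 - p)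
    have h2 : HasDerivAt (fun s => Real.log (1 - p + p * Real.exp s))
        (p * Real.exp s / (1 - p + p * Real.exp s)) s := h1.log (hu s).ne'
    have h3 : HasDerivAt (fun s : ℝ => p * s + s ^ 2 / 8) (p + s / 4) s := by
      have := ((hasDerivAt_id s).const_mul p).add ((hasDerivAt_pow 2 s).div_const 8)
      refine this.congr_deriv ?_
      push_cast; ring
    exact h3.sub h2
  have hGd : ∀ s : ℝ, HasDerivAt G
      (1 / 4 - (p * Real.exp s * (1 - p + p * Real.exp s) - p * Real.exp s * (p * Real.exp s)) /
        (1 - p + p * Real.exp s) ^ 2) s := by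
    intro s
    have h1 : HasDerivAt (fun s => 1 - p + p * Real.exp s) (p * Real.exp s) s := by
      simpa using ((Real.hasDerivAt_exp s).const_mul p).const_add (1 - p)
    have h1' : HasDerivAt (fun s => p * Real.exp s) (p * Real.exp s) s :=
      (Real.hasDerivAt_exp s).const_mul p
    have hdiv := h1'.div h1 (hu s).ne'
    have h4 : HasDerivAt (fun s : ℝ => p + s / 4) (1 / 4) s := by
      simpa using ((hasDerivAt_id s).div_const 4).const_add p
    exact h4.sub hdiv
  have hD : ∀ s : ℝ, 0 ≤ 1 / 4 -
      (p * Real.exp s * (1 - p + p * Real.exp s) - p * Real.exp s * (p * Real.exp s)) /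
        (1 - p + p * Real.exp s) ^ 2 := by
    intro s
    rw [sub_nonneg, div_le_iff₀ (pow_pos (hu s) 2)]
    nlinarith [sq_nonneg ((1 - p) - p * Real.exp s), mul_nonneg hp0 (Real.exp_pos s).le]
  have hGmono : Monotone G :=
    monotone_of_deriv_nonneg (fun s => (hGd s).differentiableAt)
      (fun s => by rw [(hGd s).deriv]; exact hD s)
  have hG0 : G 0 = 0 := by
    simp only [hG, Real.exp_zero, mul_one]
    have : 1 - p + p = 1 := by ring
    rw [this]
    norm_num
  have hF0 : F 0 = 0 := by
    simp only [hF, Real.exp_zero, mul_one, mul_zero]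
    have : 1 - p + p = 1 := by ring
    rw [this]
    norm_num
  have hFdiff : Differentiable ℝ F := fun s => (hFd s).differentiableAt
  have key : 0 ≤ F t := by
    rcases le_or_gt 0 t with ht | ht
    · have hmono : MonotoneOn F (Set.Ici 0) := by
        apply monotoneOn_of_deriv_nonneg (convex_Ici 0) hFdiff.continuous.continuousOn
          hFdiff.differentiableOn
        intro x hx
        rw [(hFd x).deriv]
        have hx0 : (0:ℝ) ≤ x := le_of_lt (by simpa using hx)
        have := hGmono hx0
        rw [hG0] at this
        exact this
      have := hmono (Set.mem_Ici.mpr le_rfl) (Set.mem_Ici.mpr ht) ht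
      rw [hF0] at this; exact this
    · have hanti : AntitoneOn F (Set.Iic 0) := by
        apply antitoneOn_of_deriv_nonpos (convex_Iic 0) hFdiff.continuous.continuousOn
          hFdiff.differentiableOn
        intro x hx
        rw [(hFd x).deriv]
        have hx0 : x ≤ (0:ℝ) := le_of_lt (by simpa using hx)
        have := hGmono hx0
        rw [hG0] at this
        exact this
      have := hanti (Set.mem_Iic.mpr ht.le) (Set.mem_Iic.mpr le_rfl) ht.le
      rw [hF0] at this; exact this
  have hlog : Real.log (1 - p + p * Real.exp t) ≤ p * t + t ^ 2 / 8 := by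
    have : F t = p * t + t ^ 2 / 8 - Real.log (1 - p + p * Real.exp t) := rfl
    linarith [key, this ▸ key]
  calc 1 - p + p * Real.exp t = Real.exp (Real.log (1 - p + p * Real.exp t)) :=
        (Real.exp_log (hu t)).symm
    _ ≤ Real.exp (p * t + t ^ 2 / 8) := Real.exp_le_exp.mpr hlog

/-- Chernoff/Hoeffding tail bound for the empirical frequency of a rare-complement set. -/
lemma tail_bound {Ω : Type*} [MeasurableSpace Ω] (P : Measure Ω) [IsProbabilityMeasure P]
    {E : Type*} [MeasurableSpace E] (μ : Measure E) [IsProbabilityMeasure μ]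
    {M : ℕ} (hM : 1 ≤ M) (Λ : Fin M → Ω → E)
    (hΛmeas : ∀ j, Measurable (Λ j))
    (hΛindep : iIndepFun Λ P)
    (hΛlaw : ∀ j, Measure.map (Λ j) P = μ)
    (S : Set E) (hS : MeasurableSet S)
    {ε α : ℝ} (hαε : α < ε)
    (hp : (μ S).toReal < 1 - ε) :
    (P {ω | 1 - α ≤ (1 / M : ℝ) * ∑ j, S.indicator (fun _ => (1 : ℝ)) (Λ j ω)}).toReal
      ≤ Real.exp (-2 * M * (ε - α) ^ 2) := by
  classical
  set p : ℝ := (μ S).toReal with hpdef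
  have hp0 : 0 ≤ p := ENNReal.toReal_nonneg
  have hp1 : p ≤ 1 := by
    simpa using ENNReal.toReal_mono ENNReal.one_ne_top (prob_le_one (μ := μ) (s := S))
  set Y : Fin M → Ω → ℝ := fun j ω => S.indicator (fun _ => (1 : ℝ)) (Λ j ω) with hY
  have hYmeas : ∀ j, Measurable (Y j) := fun j =>
    (measurable_const.indicator hS).comp (hΛmeas j)
  have hYindep : iIndepFun Y P :=
    hΛindep.comp (fun _ => S.indicator fun _ => (1:ℝ))
      (fun _ => measurable_const.indicator hS)
  have hY01 : ∀ j ω, Y j ω = 0 ∨ Y j ω = 1 := by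
    intro j ω
    by_cases h : Λ j ω ∈ S
    · right; simp [hY, Set.indicator_of_mem h]
    · left; simp [hY, Set.indicator_of_notMem h]
  set d : ℝ := 1 - α - p with hd
  have hdpos : ε - α ≤ d := by simp only [hd]; linarith
  have hεα : 0 < ε - α := by linarith
  set t : ℝ := 4 * d with htdef
  have ht : 0 < t := by simp only [htdef]; nlinarith
  have hint : ∀ j, Integrable (fun ω => Real.exp (t * Y j ω)) P := by
    intro j
    refine Integrable.mono' (integrable_const (Real.exp |t|))
      ((hYmeas j).const_mul t).exp.aestronglyMeasurable ?_
    filter_upwards with ω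
    rw [Real.norm_eq_abs, abs_of_pos (Real.exp_pos _), Real.exp_le_exp]
    rcases hY01 j ω with h | h <;> rw [h]
    · simpa using abs_nonneg t
    · rw [mul_one]; exact le_abs_self t
  have hMpos : (0:ℝ) < (M:ℝ) := by exact_mod_cast hM
  -- mgf of each Y j
  have hmgf : ∀ j, mgf (Y j) P t = p * Real.exp t + (1 - p) := by
    intro j
    have hstep : mgf (Y j) P t
        = ∫ e, Real.exp (t * S.indicator (fun _ => (1:ℝ)) e) ∂μ := by
      rw [mgf, ← hΛlaw j, integral_map (hΛmeas j).aemeasurable]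
      exact ((measurable_const.indicator hS).const_mul t).exp.aestronglyMeasurable
    rw [hstep]
    have hfun : ∀ e, Real.exp (t * S.indicator (fun _ => (1:ℝ)) e)
        = S.indicator (fun _ => Real.exp t - 1) e + 1 := by
      intro e
      by_cases h : e ∈ S
      · simp [Set.indicator_of_mem h]
      · simp [Set.indicator_of_notMem h]
    simp_rw [hfun]
    rw [integral_add ((integrable_const _).indicator hS) (integrable_const 1),
      integral_indicator_const _ hS]
    simp only [smul_eq_mul, integral_const, measure_univ, ENNReal.toReal_one, one_smul, probReal_univ]
    rw [measureReal_def, ← hpdef]; ring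
  -- rewrite the event
  have hset : {ω | 1 - α ≤ (1 / M : ℝ) * ∑ j, S.indicator (fun _ => (1 : ℝ)) (Λ j ω)}
      = {ω | (M:ℝ) * (1 - α) ≤ (∑ j, Y j) ω} := by
    ext ω
    simp only [Set.mem_setOf_eq, Finset.sum_apply, hY]
    rw [one_div, inv_mul_eq_div, le_div_iff₀ hMpos, mul_comm]
  rw [hset]
  have hchern := measure_ge_le_exp_mul_mgf (X := ∑ j, Y j) (μ := P) ((M:ℝ) * (1 - α)) ht.le
    (hYindep.integrable_exp_mul_sum hYmeas (fun j _ => hint j))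
  refine hchern.trans ?_
  rw [hYindep.mgf_sum hYmeas]
  simp_rw [hmgf]
  rw [Finset.prod_const, Finset.card_univ, Fintype.card_fin]
  have hbase0 : 0 ≤ p * Real.exp t + (1 - p) := by
    nlinarith [Real.exp_pos t, mul_nonneg hp0 (Real.exp_pos t).le]
  have hbase : p * Real.exp t + (1 - p) ≤ Real.exp (p * t + t ^ 2 / 8) := by
    have := bernoulli_mgf_le hp0 hp1 t
    linarith
  calc Real.exp (-t * ((M:ℝ) * (1 - α))) * (p * Real.exp t + (1 - p)) ^ M
      ≤ Real.exp (-t * ((M:ℝ) * (1 - α))) * Real.exp (p * t + t ^ 2 / 8) ^ M := by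
        apply mul_le_mul_of_nonneg_left _ (Real.exp_pos _).le
        exact pow_le_pow_left₀ hbase0 hbase M
    _ = Real.exp (-t * ((M:ℝ) * (1 - α)) + (M:ℝ) * (p * t + t ^ 2 / 8)) := by
        rw [← Real.exp_nat_mul, ← Real.exp_add]
    _ = Real.exp (-2 * (M:ℝ) * d ^ 2) := by
        congr 1
        simp only [htdef, hd]
        ring
    _ ≤ Real.exp (-2 * M * (ε - α) ^ 2) := by
        rw [Real.exp_le_exp]
        have hsq : (ε - α) ^ 2 ≤ d ^ 2 := by nlinarith
        nlinarith

/-- The probability that the sampled feasible set `𝕏₀^{α,M}(ω)` is not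
contained in the feasible set `𝕏₀^ε` is at most `L·exp(−2M(ε−α)²)`. -/
theorem prob_sampled_not_subset_feasible_le
    {Ω : Type*} [MeasurableSpace Ω] (P : Measure Ω) [IsProbabilityMeasure P]
    {E : Type*} [MeasurableSpace E] (μ : Measure E) [IsProbabilityMeasure μ]
    {M : ℕ} (hM : 1 ≤ M) (Λ : Fin M → Ω → E)
    (hΛmeas : ∀ j, Measurable (Λ j))
    (hΛindep : iIndepFun Λ P)
    (hΛlaw : ∀ j, Measure.map (Λ j) P = μ)
    {X : Type*} (Ξ : Finset X) {L : ℕ} (hLcard : Ξ.card = L) (hL : 1 ≤ L)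
    {N : ℕ} (hN : 1 ≤ N)
    (G : Fin (2 * N) → X → Set E) (hG : ∀ k x, MeasurableSet (G k x))
    {ε α : ℝ} (hε : ε ∈ Set.Ioo (0 : ℝ) 1) (hα : α ∈ Set.Ico (0 : ℝ) ε) :
    (P {ω | ¬ ({x : X | x ∈ Ξ ∧ ∀ k : Fin (2 * N),
            1 - α ≤ (1 / M : ℝ) * ∑ j, (G k x).indicator (fun _ => (1 : ℝ)) (Λ j ω)}
          ⊆ {x : X | x ∈ Ξ ∧ ∀ k : Fin (2 * N), 1 - ε ≤ (μ (G k x)).toReal})}).toReal ≤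
      L * Real.exp (-2 * M * (ε - α) ^ 2) := by
  classical
  set T : X → Set Ω := fun x =>
    if h : ∃ k : Fin (2 * N), (μ (G k x)).toReal < 1 - ε then
      {ω | 1 - α ≤ (1 / M : ℝ) * ∑ j,
        (G h.choose x).indicator (fun _ => (1 : ℝ)) (Λ j ω)}
    else ∅ with hT
  have hsub : {ω | ¬ ({x : X | x ∈ Ξ ∧ ∀ k : Fin (2 * N),
            1 - α ≤ (1 / M : ℝ) * ∑ j, (G k x).indicator (fun _ => (1 : ℝ)) (Λ j ω)}
          ⊆ {x : X | x ∈ Ξ ∧ ∀ k : Fin (2 * N), 1 - ε ≤ (μ (G k x)).toReal})}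
        ⊆ ⋃ x ∈ Ξ, T x := by
    intro ω hω
    rw [Set.mem_setOf_eq, Set.not_subset] at hω
    obtain ⟨x, hx1, hx2⟩ := hω
    obtain ⟨hxΞ, hsamp⟩ := hx1
    have hex : ∃ k : Fin (2 * N), (μ (G k x)).toReal < 1 - ε := by
      by_contra h
      push_neg at h
      exact hx2 ⟨hxΞ, h⟩
    refine Set.mem_biUnion hxΞ ?_
    simp only [hT, dif_pos hex]
    exact hsamp hex.choose
  have h1 : P {ω | ¬ ({x : X | x ∈ Ξ ∧ ∀ k : Fin (2 * N),
            1 - α ≤ (1 / M : ℝ) * ∑ j, (G k x).indicator (fun _ => (1 : ℝ)) (Λ j ω)}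
          ⊆ {x : X | x ∈ Ξ ∧ ∀ k : Fin (2 * N), 1 - ε ≤ (μ (G k x)).toReal})}
        ≤ ∑ x ∈ Ξ, P (T x) :=
    (measure_mono hsub).trans (measure_biUnion_finset_le Ξ T)
  have h2 : ∀ x ∈ Ξ, (P (T x)).toReal ≤ Real.exp (-2 * M * (ε - α) ^ 2) := by
    intro x _
    by_cases h : ∃ k : Fin (2 * N), (μ (G k x)).toReal < 1 - ε
    · simp only [hT, dif_pos h]
      exact tail_bound P μ hM Λ hΛmeas hΛindep hΛlaw (G h.choose x) (hG _ x)
        hα.2 h.choose_spec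
    · simp only [hT, dif_neg h, measure_empty, ENNReal.toReal_zero]
      exact (Real.exp_pos _).le
  have hsumne : ∑ x ∈ Ξ, P (T x) ≠ ⊤ :=
    (ENNReal.sum_lt_top.mpr (fun x _ => measure_lt_top P _)).ne
  calc (P _).toReal ≤ (∑ x ∈ Ξ, P (T x)).toReal := ENNReal.toReal_mono hsumne h1
    _ = ∑ x ∈ Ξ, (P (T x)).toReal := ENNReal.toReal_sum (fun x _ => measure_ne_top P _)
    _ ≤ ∑ _x ∈ Ξ, Real.exp (-2 * M * (ε - α) ^ 2) := Finset.sum_le_sum h2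
    _ = L * Real.exp (-2 * M * (ε - α) ^ 2) := by
        rw [Finset.sum_const, hLcard, nsmul_eq_mul]
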